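/- Let K ∈ ℕ and N ≥ 1. Let X₀, X₁, …, X_K : Ω → ℝ^S be mutually independent square-integrable random vectors and H₀, …, H_K be S×S real matrices. Suppose that for each κ ∈ {1, …, K} there is a measurable partition (A_{κ,s})_{s ∈ Fin N} of Ω with P(A_{κ,s}) = 1/N, and that the conditional moments are the same for every κ: N · ∫_{A_{κ,s}} X_κ dP = μ_s and N · ∫_{A_{κ,s}} (X_κ − μ_s)(X_κ − μ_s)ᵀ dP = C_s for all s ∈ Fin N. Set μ' := (1/N) Σ_s μ_s. Then Y := Σ_{κ=0}^{K} H_κ · X_κ satisfies E[Y] = H₀ · E[X₀] + Σ_{κ=1}^{K} H_κ · ((1/N) Σ_{s} μ_s) and Cov[Y] = H₀ · Cov[X₀] · H₀ᵀ + Σ_{κ=1}^{K} H_κ · ( (1/N) Σ_{s} ( (μ_s − μ')(μ_s − μ')ᵀ + C_s ) ) · H_κᵀ. (Paper's Proposition 3, eqs. (16a)–(16b): moments of ȳ[k] given the current symbol when the previously transmitted symbols are unknown and uniformly distributed.) -/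

import Mathlib

open MeasureTheory ProbabilityTheory Matrix

/-- The mean of a random vector, taken componentwise. -/
noncomputable def vmean {Ω : Type*} [MeasurableSpace Ω] {d : ℕ}
    (P : Measure Ω) (X : Ω → Fin d → ℝ) : Fin d → ℝ :=
  fun i => ∫ ω, X ω i ∂P

/-- The covariance matrix of a random vector. -/
noncomputable def vcov {Ω : Type*} [MeasurableSpace Ω] {d : ℕ}
    (P : Measure Ω) (X : Ω → Fin d → ℝ) : Matrix (Fin d) (Fin d) ℝ :=
  Matrix.of fun i j => ∫ ω, (X ω i - vmean P X i) * (X ω j - vmean P X j) ∂P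

/-- The conditional mean of a random vector given an event `A` of probability `1/N`:
`μ_A := N • ∫_A X dP` (componentwise). -/
noncomputable def condMean {Ω : Type*} [MeasurableSpace Ω] {d : ℕ}
    (P : Measure Ω) (N : ℕ) (X : Ω → Fin d → ℝ) (A : Set Ω) : Fin d → ℝ :=
  fun i => (N : ℝ) * ∫ ω in A, X ω i ∂P

/-- The conditional covariance of a random vector given an event `A` of probability `1/N`:
`C_A := N • ∫_A (X − μ_A)(X − μ_A)ᵀ dP` (entrywise). -/
noncomputable def condCov {Ω : Type*} [MeasurableSpace Ω] {d : ℕ}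
    (P : Measure Ω) (N : ℕ) (X : Ω → Fin d → ℝ) (A : Set Ω) : Matrix (Fin d) (Fin d) ℝ :=
  Matrix.of fun i j =>
    (N : ℝ) * ∫ ω in A, (X ω i - condMean P N X A i) * (X ω j - condMean P N X A j) ∂P

/-- Proposition 3, eqs. (16a)–(16b): moments of `Y = Σ_κ H_κ X_κ` given the current symbol
(governing `X₀`) when the previous symbols (governing `X₁, …, X_K`) are unknown and uniformly
distributed: for each `κ ≥ 1` there is a measurable partition `(A_{κ,s})_s` with
`P(A_{κ,s}) = 1/N`, and the conditional moments of `X_κ` given `A_{κ,s}` equal `μ_s` and `C_s`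
for every such `κ`. Then `E[Y] = H₀ E[X₀] + Σ_{κ≥1} H_κ ((1/N) Σ_s μ_s)` and
`Cov[Y] = H₀ Cov[X₀] H₀ᵀ + Σ_{κ≥1} H_κ ((1/N) Σ_s ((μ_s − μ')(μ_s − μ')ᵀ + C_s)) H_κᵀ`. -/
lemma l2_mul_integrable {Ω : Type*} [MeasurableSpace Ω] {P : Measure Ω}
    {f g : Ω → ℝ} (hf : MemLp f 2 P) (hg : MemLp g 2 P) :
    Integrable (fun ω => f ω * g ω) P := by
  have h := hf.smul (r := 1) hg
  rw [memLp_one_iff_integrable] at h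
  exact h.congr (by filter_upwards with ω; simp [mul_comm])

lemma partition_integral {Ω : Type*} [MeasurableSpace Ω] (P : Measure Ω)
    {N : ℕ} {A : Fin N → Set Ω}
    (hmeas : ∀ s, MeasurableSet (A s)) (hdisj : Pairwise (Function.onFun Disjoint A))
    (hcover : (⋃ s, A s) = Set.univ)
    {f : Ω → ℝ} (hf : Integrable f P) :
    ∫ ω, f ω ∂P = ∑ s, ∫ ω in A s, f ω ∂P := by
  rw [← setIntegral_univ, ← hcover, integral_iUnion_fintype hmeas hdisj
    (fun s => hf.integrableOn)]

theorem moments_given_current_symbol_uniform_past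
    {Ω : Type*} [MeasurableSpace Ω] (P : Measure Ω) [IsProbabilityMeasure P]
    {S K N : ℕ} (hN : 1 ≤ N)
    (X : Fin (K + 1) → Ω → Fin S → ℝ)
    (hX2 : ∀ κ, ∀ i, MemLp (fun ω => X κ ω i) 2 P)
    (hXindep : iIndepFun X P)
    (H : Fin (K + 1) → Matrix (Fin S) (Fin S) ℝ)
    (A : Fin (K + 1) → Fin N → Set Ω)
    (hmeas : ∀ κ, κ ≠ 0 → ∀ s, MeasurableSet (A κ s))
    (hdisj : ∀ κ, κ ≠ 0 → Pairwise (Function.onFun Disjoint (A κ)))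
    (hcover : ∀ κ, κ ≠ 0 → (⋃ s, A κ s) = Set.univ)
    (hprob : ∀ κ, κ ≠ 0 → ∀ s, P (A κ s) = (N : ENNReal)⁻¹)
    (μ : Fin N → Fin S → ℝ) (C : Fin N → Matrix (Fin S) (Fin S) ℝ)
    (hcondMean : ∀ κ, κ ≠ 0 → ∀ s, condMean P N (X κ) (A κ s) = μ s)
    (hcondCov : ∀ κ, κ ≠ 0 → ∀ s, condCov P N (X κ) (A κ s) = C s) :
    vmean P (fun ω => ∑ κ, (H κ).mulVec (X κ ω)) =
        (H 0).mulVec (vmean P (X 0)) +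
          ∑ κ ∈ Finset.univ.erase 0, (H κ).mulVec ((N : ℝ)⁻¹ • ∑ s, μ s) ∧
      vcov P (fun ω => ∑ κ, (H κ).mulVec (X κ ω)) =
        H 0 * vcov P (X 0) * (H 0)ᵀ +
          ∑ κ ∈ Finset.univ.erase 0,
            H κ *
              ((N : ℝ)⁻¹ • ∑ s,
                (Matrix.vecMulVec (μ s - (N : ℝ)⁻¹ • ∑ t, μ t)
                    (μ s - (N : ℝ)⁻¹ • ∑ t, μ t) + C s)) *
              (H κ)ᵀ := by
  classical
  have hNR : (N : ℝ) ≠ 0 := Nat.cast_ne_zero.mpr (by omega)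
  have hint : ∀ κ i, Integrable (fun ω => X κ ω i) P :=
    fun κ i => (hX2 κ i).integrable one_le_two
  set m : Fin (K + 1) → Fin S → ℝ := fun κ => vmean P (X κ) with hm
  -- centered variables
  have hZ2 : ∀ κ i, MemLp (fun ω => X κ ω i - m κ i) 2 P :=
    fun κ i => (hX2 κ i).sub (memLp_const _)
  have hZint : ∀ κ i, Integrable (fun ω => X κ ω i - m κ i) P :=
    fun κ i => (hZ2 κ i).integrable one_le_two
  have hZmean : ∀ κ i, ∫ ω, (X κ ω i - m κ i) ∂P = 0 := by
    intro κ i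
    rw [integral_sub (hint κ i) (integrable_const _), integral_const]
    simp [hm, vmean]
  have hPA : ∀ κ, κ ≠ 0 → ∀ s, (P (A κ s)).toReal = (N : ℝ)⁻¹ := by
    intro κ h s
    rw [hprob κ h s]
    simp
  have hsetmean : ∀ κ, κ ≠ 0 → ∀ s i, ∫ ω in A κ s, X κ ω i ∂P = (N : ℝ)⁻¹ * μ s i := by
    intro κ h s i
    have h1 := congrFun (hcondMean κ h s) i
    simp only [condMean] at h1
    rw [← h1, inv_mul_cancel_left₀ hNR]
  have hmeanκ : ∀ κ, κ ≠ 0 → m κ = (N : ℝ)⁻¹ • ∑ s, μ s := by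
    intro κ h
    funext i
    simp only [hm, vmean]
    rw [partition_integral P (hmeas κ h) (hdisj κ h) (hcover κ h) (hint κ i)]
    simp [hsetmean κ h, Finset.mul_sum]
  -- mean of Y
  have hmeanY : vmean P (fun ω => ∑ κ, (H κ).mulVec (X κ ω)) = ∑ κ, (H κ).mulVec (m κ) := by
    funext i
    simp only [vmean, Finset.sum_apply, mulVec, dotProduct]
    rw [integral_finset_sum _
      (fun κ _ => integrable_finset_sum _ (fun a _ => (hint κ a).const_mul _))]
    refine Finset.sum_congr rfl fun κ _ => ?_
    rw [integral_finset_sum _ (fun a _ => (hint κ a).const_mul _)]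
    refine Finset.sum_congr rfl fun a _ => ?_
    rw [integral_const_mul]
    rfl
  -- centered Y
  have hYc : ∀ i ω,
      (∑ κ, (H κ).mulVec (X κ ω)) i - vmean P (fun ω => ∑ κ, (H κ).mulVec (X κ ω)) i =
        ∑ κ, ∑ a, H κ i a * (X κ ω a - m κ a) := by
    intro i ω
    rw [hmeanY]
    simp only [Finset.sum_apply, mulVec, dotProduct, mul_sub, Finset.sum_sub_distrib]
  -- cross terms vanish
  have hcross : ∀ (κ l : Fin (K + 1)), κ ≠ l → ∀ (a b : Fin S),
      ∫ ω, (X κ ω a - m κ a) * (X l ω b - m l b) ∂P = 0 := by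
    intro κ l hne a b
    have hind : IndepFun (fun ω => X κ ω a - m κ a) (fun ω => X l ω b - m l b) P :=
      (hXindep.indepFun hne).comp ((measurable_pi_apply a).sub measurable_const)
        ((measurable_pi_apply b).sub measurable_const)
    have h1 := hind.integral_fun_mul_eq_mul_integral (hZint κ a).1 (hZint l b).1
    have h0 : (∫ ω, (X κ ω a - m κ a) ∂P) * ∫ ω, (X l ω b - m l b) ∂P = 0 := by
      rw [hZmean, hZmean, mul_zero]
    exact h1.trans h0
  -- covariance of Y in terms of covariances of the Xκ
  have hcovY : vcov P (fun ω => ∑ κ, (H κ).mulVec (X κ ω)) =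
      ∑ κ, H κ * vcov P (X κ) * (H κ)ᵀ := by
    funext i j
    show (∫ ω, _ * _ ∂P) = _
    have hrw : ∀ ω : Ω,
        ((∑ κ, (H κ).mulVec (X κ ω)) i - vmean P (fun ω => ∑ κ, (H κ).mulVec (X κ ω)) i) *
          ((∑ κ, (H κ).mulVec (X κ ω)) j - vmean P (fun ω => ∑ κ, (H κ).mulVec (X κ ω)) j) =
        ∑ κ, ∑ l, ∑ a, ∑ b,
          (H κ i a * H l j b) * ((X κ ω a - m κ a) * (X l ω b - m l b)) := by
      intro ω
      rw [hYc i ω, hYc j ω, Finset.sum_mul_sum]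
      refine Finset.sum_congr rfl fun κ _ => Finset.sum_congr rfl fun l _ => ?_
      rw [Finset.sum_mul_sum]
      refine Finset.sum_congr rfl fun a _ => Finset.sum_congr rfl fun b _ => ?_
      ring
    rw [integral_congr_ae (Filter.Eventually.of_forall hrw)]
    have hintprod : ∀ (κ l : Fin (K + 1)) (a b : Fin S),
        Integrable (fun ω => (X κ ω a - m κ a) * (X l ω b - m l b)) P :=
      fun κ l a b => l2_mul_integrable (hZ2 κ a) (hZ2 l b)
    rw [integral_finset_sum _ (fun κ _ => integrable_finset_sum _ (fun l _ =>
      integrable_finset_sum _ (fun a _ => integrable_finset_sum _ (fun b _ =>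
        ((hintprod κ l a b).const_mul _)))))]
    have hstep : ∀ κ : Fin (K + 1),
        ∫ ω, (∑ l, ∑ a, ∑ b,
            (H κ i a * H l j b) * ((X κ ω a - m κ a) * (X l ω b - m l b))) ∂P =
          ∑ a, ∑ b, H κ i a * H κ j b * ∫ ω, (X κ ω a - m κ a) * (X κ ω b - m κ b) ∂P := by
      intro κ
      rw [integral_finset_sum _ (fun l _ => integrable_finset_sum _ (fun a _ =>
        integrable_finset_sum _ (fun b _ => ((hintprod κ l a b).const_mul _))))]
      rw [Finset.sum_eq_single κ]
      · rw [integral_finset_sum _ (fun a _ =>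
          integrable_finset_sum _ (fun b _ => ((hintprod κ κ a b).const_mul _)))]
        refine Finset.sum_congr rfl fun a _ => ?_
        rw [integral_finset_sum _ (fun b _ => ((hintprod κ κ a b).const_mul _))]
        refine Finset.sum_congr rfl fun b _ => ?_
        rw [integral_const_mul]
      · intro l _ hl
        rw [integral_finset_sum _ (fun a _ =>
          integrable_finset_sum _ (fun b _ => ((hintprod κ l a b).const_mul _)))]
        refine Finset.sum_eq_zero fun a _ => ?_
        rw [integral_finset_sum _ (fun b _ => ((hintprod κ l a b).const_mul _))]
        refine Finset.sum_eq_zero fun b _ => ?_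
        rw [integral_const_mul, hcross κ l (Ne.symm hl) a b, mul_zero]
      · intro h; exact absurd (Finset.mem_univ κ) h
    rw [Finset.sum_congr rfl fun κ _ => hstep κ]
    simp only [Matrix.sum_apply, Finset.sum_apply, Matrix.mul_apply, Matrix.transpose_apply, vcov, Matrix.of_apply,
      Finset.sum_mul, Finset.mul_sum]
    refine Finset.sum_congr rfl fun κ _ => ?_
    rw [Finset.sum_comm]
    refine Finset.sum_congr rfl fun a _ => Finset.sum_congr rfl fun b _ => ?_
    ring
  -- covariance of X κ for κ ≠ 0 via the partition
  have hmk : ∀ κ, m κ = vmean P (X κ) := fun κ => congrFun hm κ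
  set μ' : Fin S → ℝ := (N : ℝ)⁻¹ • ∑ t, μ t with hμ'
  have hcovκ : ∀ κ, κ ≠ 0 → vcov P (X κ) =
      (N : ℝ)⁻¹ • ∑ s, (Matrix.vecMulVec (μ s - μ') (μ s - μ') + C s) := by
    intro κ h
    have hvm : vmean P (X κ) = μ' := by rw [← hmk κ]; exact hmeanκ κ h
    have hCs : ∀ (s : Fin N) (a b : Fin S),
        ∫ ω in A κ s, (X κ ω a - μ s a) * (X κ ω b - μ s b) ∂P = (N : ℝ)⁻¹ * C s a b := by
      intro s a b
      have h1 := congrFun (congrFun (hcondCov κ h s) a) b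
      simp only [condCov, Matrix.of_apply, hcondMean κ h s] at h1
      rw [← h1, inv_mul_cancel_left₀ hNR]
    have hzero : ∀ (s : Fin N) (a : Fin S), ∫ ω in A κ s, (X κ ω a - μ s a) ∂P = 0 := by
      intro s a
      rw [integral_sub (hint κ a).integrableOn (integrable_const _).integrableOn,
        setIntegral_const, hsetmean κ h s a, measureReal_def, hPA κ h s]
      simp
    funext i j
    have hfint : Integrable (fun ω => (X κ ω i - μ' i) * (X κ ω j - μ' j)) P :=
      l2_mul_integrable ((hX2 κ i).sub (memLp_const _)) ((hX2 κ j).sub (memLp_const _))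
    have hentry : ∀ s : Fin N, ∫ ω in A κ s, (X κ ω i - μ' i) * (X κ ω j - μ' j) ∂P
        = (N : ℝ)⁻¹ * ((μ s i - μ' i) * (μ s j - μ' j) + C s i j) := by
      intro s
      have hpt : ∀ ω : Ω, (X κ ω i - μ' i) * (X κ ω j - μ' j)
          = (X κ ω i - μ s i) * (X κ ω j - μ s j)
            + ((μ s j - μ' j) * (X κ ω i - μ s i)
            + ((μ s i - μ' i) * (X κ ω j - μ s j)
            + (μ s i - μ' i) * (μ s j - μ' j))) := by intro ω; ring
      rw [integral_congr_ae (Filter.Eventually.of_forall hpt)]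
      have I1 : IntegrableOn (fun ω => (X κ ω i - μ s i) * (X κ ω j - μ s j)) (A κ s) P :=
        (l2_mul_integrable ((hX2 κ i).sub (memLp_const _))
          ((hX2 κ j).sub (memLp_const _))).integrableOn
      have I2 : IntegrableOn (fun ω => (μ s j - μ' j) * (X κ ω i - μ s i)) (A κ s) P :=
        (((hint κ i).sub (integrable_const _)).const_mul _).integrableOn
      have I3 : IntegrableOn (fun ω => (μ s i - μ' i) * (X κ ω j - μ s j)) (A κ s) P :=
        (((hint κ j).sub (integrable_const _)).const_mul _).integrableOn
      have I4 : IntegrableOn (fun _ : Ω => (μ s i - μ' i) * (μ s j - μ' j)) (A κ s) P :=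
        (integrable_const _).integrableOn
      have I34 : IntegrableOn (fun ω => (μ s i - μ' i) * (X κ ω j - μ s j)
          + (μ s i - μ' i) * (μ s j - μ' j)) (A κ s) P := I3.add I4
      have I234 : IntegrableOn (fun ω => (μ s j - μ' j) * (X κ ω i - μ s i)
          + ((μ s i - μ' i) * (X κ ω j - μ s j) + (μ s i - μ' i) * (μ s j - μ' j)))
          (A κ s) P := I2.add I34
      rw [integral_add I1 I234, integral_add I2 I34, integral_add I3 I4,
        integral_const_mul, integral_const_mul, hzero s i, hzero s j,
        hCs s i j, setIntegral_const, measureReal_def, hPA κ h s]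
      simp only [smul_eq_mul]
      ring
    show (∫ ω, (X κ ω i - vmean P (X κ) i) * (X κ ω j - vmean P (X κ) j) ∂P) = _
    rw [hvm, partition_integral P (hmeas κ h) (hdisj κ h) (hcover κ h) hfint,
      Finset.sum_congr rfl fun s _ => hentry s]
    simp only [Matrix.smul_apply, Matrix.sum_apply, Matrix.add_apply, Matrix.vecMulVec_apply,
      Pi.sub_apply, smul_eq_mul, Finset.mul_sum]
  constructor
  · rw [hmeanY, ← Finset.add_sum_erase Finset.univ (fun κ => (H κ).mulVec (m κ))
      (Finset.mem_univ 0)]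
    congr 1
    exact Finset.sum_congr rfl fun κ hκ => by
      rw [hmeanκ κ (Finset.ne_of_mem_erase hκ)]
  · rw [hcovY, ← Finset.add_sum_erase Finset.univ (fun κ => H κ * vcov P (X κ) * (H κ)ᵀ)
      (Finset.mem_univ 0)]
    congr 1
    exact Finset.sum_congr rfl fun κ hκ => by
      rw [hcovκ κ (Finset.ne_of_mem_erase hκ)]
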